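/- For every positive integer k and nonnegative integer i ≤ k, if f(x) = x^{2k+1} then the function F(x) = -∑_{i=0}^{k} [(2k)!! / ((2k-2i)!! (2k-2i+1))] x^{2k+1-2i} satisfies F''(x) - x F'(x) = x^{2k+1}. -/

import Mathlib

/-- Double factorial: `n!! = n (n-2) (n-4) ⋯`, with `0!! = 1!! = 1`. -/
def dfac : ℕ → ℕ
  | 0 => 1
  | 1 => 1
  | (n + 2) => (n + 2) * dfac n

lemma dfac_pos : ∀ n, 0 < dfac n
  | 0 => Nat.one_pos
  | 1 => Nat.one_pos
  | (n+2) => Nat.mul_pos (Nat.succ_pos _) (dfac_pos n)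

lemma dfac_ne_zero (n : ℕ) : (dfac n : ℝ) ≠ 0 := by
  exact_mod_cast (dfac_pos n).ne'

/-- The explicit polynomial solves the Ornstein-Uhlenbeck Stein equation for
`h(x) = x^(2k+1)` (whose standard normal expectation is 0). -/
theorem stmt_2 (k : ℕ) (hk : 0 < k) (F : ℝ → ℝ)
    (hF : ∀ x : ℝ, F x =
      -∑ i ∈ Finset.range (k + 1),
        ((dfac (2 * k) : ℝ) / ((dfac (2 * k - 2 * i) : ℝ) * (2 * k - 2 * i + 1 : ℝ)))
          * x ^ (2 * k + 1 - 2 * i)) :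
    ∀ x : ℝ, deriv (deriv F) x - x * deriv F x = x ^ (2 * k + 1) := by
  intro x
  have hFfun : F = fun y : ℝ => -∑ i ∈ Finset.range (k + 1),
      ((dfac (2 * k) : ℝ) / ((dfac (2 * k - 2 * i) : ℝ) * (2 * k - 2 * i + 1 : ℝ)))
        * y ^ (2 * k + 1 - 2 * i) := funext hF
  subst hFfun
  set c : ℕ → ℝ := fun i =>
    (dfac (2 * k) : ℝ) / ((dfac (2 * k - 2 * i) : ℝ) * (2 * k - 2 * i + 1 : ℝ)) with hc
  have h1 : ∀ y : ℝ,
      HasDerivAt (fun y : ℝ => -∑ i ∈ Finset.range (k + 1), c i * y ^ (2 * k + 1 - 2 * i))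
        (-∑ i ∈ Finset.range (k + 1),
          c i * (↑(2 * k + 1 - 2 * i) * y ^ (2 * k + 1 - 2 * i - 1))) y := by
    intro y
    exact (HasDerivAt.fun_sum fun i _ => (hasDerivAt_pow _ y).const_mul (c i)).fun_neg
  have hd1 : deriv (fun y : ℝ => -∑ i ∈ Finset.range (k + 1), c i * y ^ (2 * k + 1 - 2 * i))
      = fun y : ℝ => -∑ i ∈ Finset.range (k + 1),
          c i * (↑(2 * k + 1 - 2 * i) * y ^ (2 * k + 1 - 2 * i - 1)) :=
    funext fun y => (h1 y).deriv
  rw [hd1]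
  have h2 : HasDerivAt (fun y : ℝ => -∑ i ∈ Finset.range (k + 1),
        c i * (↑(2 * k + 1 - 2 * i) * y ^ (2 * k + 1 - 2 * i - 1)))
      (-∑ i ∈ Finset.range (k + 1),
        c i * (↑(2 * k + 1 - 2 * i) *
          (↑(2 * k + 1 - 2 * i - 1) * x ^ (2 * k + 1 - 2 * i - 1 - 1)))) x :=
    (HasDerivAt.fun_sum fun i _ =>
      ((hasDerivAt_pow _ x).const_mul _).const_mul (c i)).fun_neg
  rw [h2.deriv]
  set g : ℕ → ℝ := fun i =>
    if i ≤ k then (dfac (2 * k) : ℝ) / (dfac (2 * k - 2 * i) : ℝ) * x ^ (2 * k + 1 - 2 * i)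
    else 0 with hg
  have key : ∀ i ∈ Finset.range (k + 1),
      x * (c i * (↑(2 * k + 1 - 2 * i) * x ^ (2 * k + 1 - 2 * i - 1)))
        - c i * (↑(2 * k + 1 - 2 * i) *
            (↑(2 * k + 1 - 2 * i - 1) * x ^ (2 * k + 1 - 2 * i - 1 - 1)))
      = g i - g (i + 1) := by
    intro i hi
    rw [Finset.mem_range, Nat.lt_succ_iff] at hi
    rcases eq_or_lt_of_le hi with rfl | hlt
    · have e1 : 2 * i + 1 - 2 * i = 1 := by omega
      have e2 : 2 * i - 2 * i = 0 := by omega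
      simp only [hc, hg, e1, e2, Nat.sub_self, dfac, if_pos le_rfl,
        if_neg (by omega : ¬ i + 1 ≤ i)]
      push_cast
      ring
    · obtain ⟨d, hd⟩ : ∃ d, 2 * k = 2 * i + (d + 2) := ⟨2 * k - 2 * i - 2, by omega⟩
      have e0 : 2 * k - 2 * i = d + 2 := by omega
      have e1 : 2 * k + 1 - 2 * i = d + 3 := by omega
      have e2 : 2 * k + 1 - 2 * i - 1 = d + 2 := by omega
      have e3 : 2 * k + 1 - 2 * i - 1 - 1 = d + 1 := by omega
      have e4 : 2 * k - 2 * (i + 1) = d := by omega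
      have e5 : 2 * k + 1 - 2 * (i + 1) = d + 1 := by omega
      have e6 : (2 * (k : ℝ) - 2 * (i : ℝ) + 1) = (d : ℝ) + 3 := by
        have h' : (2 * (k : ℝ)) = 2 * i + (d + 2) := by exact_mod_cast hd
        linarith
      have e7 : dfac (d + 2) = (d + 2) * dfac d := rfl
      simp only [hc, hg, e0, e1, e2, e3, e4, e5, e6, e7,
        if_pos hi, if_pos (by omega : i + 1 ≤ k)]
      have hdf := dfac_ne_zero d
      push_cast
      field_simp
      ring
  rw [mul_neg, sub_neg_eq_add, Finset.mul_sum, neg_add_eq_sub,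
    ← Finset.sum_sub_distrib, Finset.sum_congr rfl key, Finset.sum_range_sub']
  simp only [hg, if_pos (Nat.zero_le k), if_neg (by omega : ¬ k + 1 ≤ k),
    Nat.mul_zero, Nat.sub_zero, sub_zero]
  rw [div_self (dfac_ne_zero _), one_mul]
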